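/- Let W, V_1, ..., V_n be a Nica-covariant isometric representation of O_n on H such that both W is a pure isometry and the row isometry {V_1,...,V_n} is pure, with W restricted to L_0 = ⋂_i ker V_i* a pure isometry. Then setting L = L_0 ∩ ker W*, the subspaces V_μ W^m L (μ a word in {1,...,n}, m ≥ 0) are pairwise orthogonal and their closed span is H; hence the representation is a direct sum of dim L copies of the left regular representation of O_n. -/

import Mathlib

open ContinuousLinearMap

/-- A Nica-covariant weak bi-shift is a direct sum of left regular representations:
if `{W, V_1, …, V_n}` is a Nica-covariant isometric representation of `O_n` with `W`
pure, the row isometry `{V_i}` pure, and `W` restricted to `L_0 = ⋂_i ker V_i*` pure,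
then for `L = L_0 ⊓ ker W*` the subspaces `V_μ W^m L` are pairwise orthogonal and
their closed span is all of `H` (so the representation is a direct sum of `dim L`
copies of the left regular representation of `O_n`). -/
theorem stmt_18 {H : Type*} [NormedAddCommGroup H] [InnerProductSpace ℂ H] [CompleteSpace H]
    (n : ℕ) (hn : 0 < n) (W : H →L[ℂ] H) (V : Fin n → H →L[ℂ] H)
    (hWiso : adjoint W ∘L W = 1)
    (hViso : ∀ i, adjoint (V i) ∘L V i = 1)
    (horth : ∀ i j, i ≠ j → adjoint (V i) ∘L V j = 0)
    (hWV : ∀ i : Fin n, ∀ h : (i : ℕ) + 1 < n, W ∘L V i = V ⟨(i : ℕ) + 1, h⟩)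
    (hWVn : W ∘L V ⟨n - 1, by omega⟩ = V ⟨0, hn⟩ ∘L W)
    (hNC : adjoint W ∘L V ⟨0, hn⟩ = V ⟨n - 1, by omega⟩ ∘L adjoint W)
    (L₀ : Submodule ℂ H) (hL₀ : L₀ = ⨅ i : Fin n, LinearMap.ker (adjoint (V i) : H →ₗ[ℂ] H))
    -- `W` is a pure isometry:
    (hWpure : (⨅ m : ℕ, LinearMap.range ((W ^ m : H →L[ℂ] H) : H →ₗ[ℂ] H)) = ⊥)
    -- the row isometry `{V_1, …, V_n}` is pure:
    (hVpure : (⨆ μ : List (Fin n),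
        Submodule.map (((μ.map V).prod : H →L[ℂ] H) : H →ₗ[ℂ] H) L₀).topologicalClosure = ⊤)
    -- `W` restricted to `L₀` is a pure isometry:
    (hWL₀pure : (⨆ m : ℕ,
        Submodule.map ((W ^ m : H →L[ℂ] H) : H →ₗ[ℂ] H) (LinearMap.ker (adjoint W : H →ₗ[ℂ] H) ⊓ L₀)).topologicalClosure = L₀)
    (L : Submodule ℂ H) (hL : L = L₀ ⊓ LinearMap.ker (adjoint W : H →ₗ[ℂ] H)) :
    (∀ μ ν : List (Fin n), ∀ m k : ℕ, (μ, m) ≠ (ν, k) →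
        ∀ x ∈ L, ∀ y ∈ L,
          (inner ℂ ((μ.map V).prod ((W ^ m) x)) ((ν.map V).prod ((W ^ k) y)) : ℂ) = 0) ∧
      (⨆ μ : List (Fin n), ⨆ m : ℕ,
        Submodule.map (((μ.map V).prod ∘L W ^ m : H →L[ℂ] H) : H →ₗ[ℂ] H) L).topologicalClosure = ⊤ := by
  -- basic consequences
  have hWW : ∀ z : H, adjoint W (W z) = z := by
    intro z
    have := congrFun (congrArg DFunLike.coe hWiso) z
    simpa using this
  have hkerV : ∀ x, x ∈ L → ∀ i, adjoint (V i) x = 0 := by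
    intro x hx i
    rw [hL] at hx
    have hx0 : x ∈ L₀ := hx.1
    rw [hL₀, Submodule.mem_iInf] at hx0
    exact LinearMap.mem_ker.mp (hx0 i)
  have hkerW : ∀ x, x ∈ L → adjoint W x = 0 := by
    intro x hx
    rw [hL] at hx
    exact LinearMap.mem_ker.mp hx.2
  -- Claim A : V_i^* W^k x = 0 for x ∈ L
  have claimA : ∀ (x : H), x ∈ L → ∀ (k : ℕ) (i : Fin n),
      adjoint (V i) ((W ^ k) x) = 0 := by
    intro x hx k
    induction k with
    | zero => intro i; simpa using hkerV x hx i
    | succ k ih =>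
      intro i
      have hz : (W ^ (k + 1)) x = W ((W ^ k) x) := by
        rw [pow_succ']; rfl
      rw [hz]
      set z := (W ^ k) x with hzdef
      by_cases h0 : (i : ℕ) = 0
      · have hi : i = ⟨0, hn⟩ := by ext; simpa using h0
        have hadj : adjoint (V ⟨0, hn⟩) ∘L W = W ∘L adjoint (V ⟨n - 1, by omega⟩) := by
          have := congrArg adjoint hNC
          simpa [adjoint_comp, adjoint_adjoint] using this
        have := congrFun (congrArg DFunLike.coe hadj) z
        simp only [comp_apply] at this
        rw [hi, this, ih ⟨n - 1, by omega⟩]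
        simp
      · have hlt : (i : ℕ) - 1 + 1 < n := by omega
        have h1 : W ∘L V ⟨(i : ℕ) - 1, by omega⟩ = V i := by
          rw [hWV ⟨(i : ℕ) - 1, by omega⟩ hlt]
          congr 1
          ext
          simp
          omega
        have hadj : adjoint (V i) = adjoint (V ⟨(i : ℕ) - 1, by omega⟩) ∘L adjoint W := by
          rw [← h1, adjoint_comp]
        rw [hadj]
        simp only [comp_apply]
        rw [hWW z, ih ⟨(i : ℕ) - 1, by omega⟩]
  -- inner products under W
  have innerW : ∀ a b : H, (inner ℂ (W a) (W b) : ℂ) = inner ℂ a b := by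
    intro a b
    rw [← adjoint_inner_right]
    rw [hWW]
  have claimB : ∀ x, x ∈ L → ∀ y, y ∈ L → ∀ m k : ℕ, m ≠ k →
      (inner ℂ ((W ^ m) x) ((W ^ k) y) : ℂ) = 0 := by
    intro x hx y hy m
    induction m with
    | zero =>
      intro k hk
      obtain ⟨k', rfl⟩ : ∃ k', k = k' + 1 := ⟨k - 1, by omega⟩
      have hz : (W ^ (k' + 1)) y = W ((W ^ k') y) := by rw [pow_succ']; rfl
      simp only [pow_zero, one_apply_eq_self, hz]
      rw [← adjoint_inner_left, hkerW x hx, inner_zero_left]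
    | succ m ih =>
      intro k hk
      cases k with
      | zero =>
        have hz : (W ^ (m + 1)) x = W ((W ^ m) x) := by rw [pow_succ']; rfl
        simp only [pow_zero, one_apply_eq_self, hz]
        rw [← adjoint_inner_right, hkerW y hy, inner_zero_right]
      | succ k =>
        have hzx : (W ^ (m + 1)) x = W ((W ^ m) x) := by rw [pow_succ']; rfl
        have hzy : (W ^ (k + 1)) y = W ((W ^ k) y) := by rw [pow_succ']; rfl
        rw [hzx, hzy, innerW]
        exact ih k (by omega)
  -- main orthogonality
  have main : ∀ μ ν : List (Fin n), ∀ m k : ℕ, (μ, m) ≠ (ν, k) →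
      ∀ x ∈ L, ∀ y ∈ L,
        (inner ℂ ((μ.map V).prod ((W ^ m) x)) ((ν.map V).prod ((W ^ k) y)) : ℂ) = 0 := by
    intro μ
    induction μ with
    | nil =>
      intro ν m k hne x hx y hy
      cases ν with
      | nil =>
        have hmk : m ≠ k := by
          intro h; exact hne (by simp [h])
        simp only [List.map_nil, List.prod_nil, one_apply_eq_self]
        exact claimB x hx y hy m k hmk
      | cons j ν' =>
        simp only [List.map_nil, List.prod_nil, one_apply_eq_self, List.map_cons, List.prod_cons,
          mul_apply_eq_comp]
        rw [← adjoint_inner_left, claimA x hx m j, inner_zero_left]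
    | cons i μ' ih =>
      intro ν m k hne x hx y hy
      cases ν with
      | nil =>
        simp only [List.map_nil, List.prod_nil, one_apply_eq_self, List.map_cons, List.prod_cons,
          mul_apply_eq_comp]
        rw [← adjoint_inner_right, claimA y hy k i, inner_zero_right]
      | cons j ν' =>
        simp only [List.map_cons, List.prod_cons, mul_apply_eq_comp]
        by_cases hij : i = j
        · subst hij
          rw [← adjoint_inner_right]
          have : adjoint (V i) ((V i) ((ν'.map V).prod ((W ^ k) y)))
              = (ν'.map V).prod ((W ^ k) y) := by
            have := congrFun (congrArg DFunLike.coe (hViso i)) ((ν'.map V).prod ((W ^ k) y))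
            simpa using this
          rw [this]
          refine ih ν' m k ?_ x hx y hy
          intro h
          apply hne
          have h1 : μ' = ν' := (Prod.mk.injEq _ _ _ _).mp h |>.1
          have h2 : m = k := (Prod.mk.injEq _ _ _ _).mp h |>.2
          rw [h1, h2]
        · rw [← adjoint_inner_right]
          have : adjoint (V i) ((V j) ((ν'.map V).prod ((W ^ k) y))) = 0 := by
            have := congrFun (congrArg DFunLike.coe (horth i j hij))
              ((ν'.map V).prod ((W ^ k) y))
            simpa using this
          rw [this, inner_zero_right]
  refine ⟨main, ?_⟩
  -- Part 2
  set S := ⨆ μ : List (Fin n), ⨆ m : ℕ,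
      Submodule.map (((μ.map V).prod ∘L W ^ m : H →L[ℂ] H) : H →ₗ[ℂ] H) L with hS
  have hmapcl : ∀ (T : H →L[ℂ] H) (U : Submodule ℂ H),
      Submodule.map (T : H →ₗ[ℂ] H) U.topologicalClosure ≤ (Submodule.map (T : H →ₗ[ℂ] H) U).topologicalClosure := by
    intro T U x hx
    obtain ⟨a, ha, rfl⟩ := hx
    have h1 : T a ∈ closure (T '' (U : Set H)) :=
      image_closure_subset_closure_image T.continuous ⟨a, ha, rfl⟩
    have h2 : closure (T '' (U : Set H)) ⊆ closure ((Submodule.map (T : H →ₗ[ℂ] H) U : Submodule ℂ H) : Set H) := by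
      apply closure_mono
      intro b hb
      obtain ⟨c, hc, rfl⟩ := hb
      exact ⟨c, hc, rfl⟩
    exact h2 h1
  have key : ∀ μ : List (Fin n),
      Submodule.map (((μ.map V).prod : H →L[ℂ] H) : H →ₗ[ℂ] H) L₀ ≤ S.topologicalClosure := by
    intro μ
    conv_lhs => rw [← hWL₀pure]
    refine le_trans (hmapcl _ _) ?_
    refine Submodule.topologicalClosure_minimal _ ?_ (Submodule.isClosed_topologicalClosure _)
    rw [Submodule.map_iSup]
    apply iSup_le
    intro m
    have heq : Submodule.map (((μ.map V).prod : H →L[ℂ] H) : H →ₗ[ℂ] H)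
        (Submodule.map ((W ^ m : H →L[ℂ] H) : H →ₗ[ℂ] H) (LinearMap.ker (adjoint W : H →ₗ[ℂ] H) ⊓ L₀))
        = Submodule.map (((μ.map V).prod ∘L W ^ m : H →L[ℂ] H) : H →ₗ[ℂ] H) L := by
      rw [hL]
      rw [inf_comm]
      ext b
      simp only [Submodule.mem_map]
      constructor
      · rintro ⟨c, ⟨d, hd, rfl⟩, rfl⟩
        exact ⟨d, hd, rfl⟩
      · rintro ⟨d, hd, rfl⟩
        exact ⟨(W ^ m) d, ⟨d, hd, rfl⟩, rfl⟩
    rw [heq]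
    refine le_trans ?_ (Submodule.le_topologicalClosure _)
    exact le_iSup_of_le μ (le_iSup_of_le m le_rfl)
  have hfin : (⨆ μ : List (Fin n), Submodule.map (((μ.map V).prod : H →L[ℂ] H) : H →ₗ[ℂ] H) L₀) ≤
      S.topologicalClosure := iSup_le key
  have := Submodule.topologicalClosure_minimal _ hfin
    (Submodule.isClosed_topologicalClosure _)
  rw [hVpure] at this
  exact top_le_iff.mp this
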